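/- For any integer k ≥ 3, the maximum over all sign vectors σ ∈ {−1,+1}^k of |∑_{a=0}^{k−1} σ_a e^{iaπ/k}|² equals 1/sin²(π/(2k)), and the maximum is achieved by σ_a = +1 for all a. -/

import Mathlib

open Real

lemma abs_cos_periodic' : Function.Periodic (fun x => |Real.cos x|) π := by
  intro x; simp [Real.cos_add_pi]

lemma integral_abs_cos' (t : ℝ) : ∫ x in t..(t + π), |Real.cos x| = 2 := by
  have := (abs_cos_periodic').intervalIntegral_add_eq t (-(π/2))
  rw [this]
  have h1 : -(π/2) + π = π/2 := by ring
  rw [h1, intervalIntegral.integral_congr (g := Real.cos) ?_, integral_cos]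
  · norm_num
  · intro x hx
    rw [Set.uIcc_of_le (by linarith [Real.pi_pos])] at hx
    exact abs_of_nonneg (Real.cos_nonneg_of_mem_Icc hx)

lemma abs_cos_sum_le' (k : ℕ) (hk : 1 ≤ k) (t : ℝ) :
    ∑ a ∈ Finset.range k, |Real.cos (t + a * π / k)| ≤ 1 / Real.sin (π / (2 * k)) := by
  have hk1 : (1:ℝ) ≤ k := by exact_mod_cast hk
  have hkpos : (0:ℝ) < k := by linarith
  set h := π / (2 * k) with hh
  have hhpos : 0 < h := by positivity
  have hhlt : h < π := by
    rw [hh, div_lt_iff₀ (by positivity)]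
    nlinarith [Real.pi_pos]
  have hs : 0 < Real.sin h := Real.sin_pos_of_pos_of_lt_pi hhpos hhlt
  rw [le_div_iff₀ hs]
  have h2 : π / k = 2 * h := by rw [hh]; field_simp
  set u : ℕ → ℝ := fun a => t - h + a * (π / k) with hu
  have hterm : ∀ a : ℕ, |Real.cos (t + a * π / k)| * Real.sin h
      ≤ (∫ x in (u a)..(u (a+1)), |Real.cos x|) / 2 := by
    intro a
    have hle : u a ≤ u (a+1) := by
      simp only [hu]
      push_cast
      nlinarith
    have heq : Real.sin (u (a+1)) - Real.sin (u a)
        = 2 * Real.cos (t + a * π / k) * Real.sin h := by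
      have e1 : u (a+1) = (t + a * π / k) + h := by
        simp only [hu]; push_cast; rw [h2]; ring
      have e2 : u a = (t + a * π / k) - h := by
        simp only [hu]; rw [h2]; ring
      rw [e1, e2, Real.sin_add, Real.sin_sub]; ring
    have hb : |Real.sin (u (a+1)) - Real.sin (u a)| ≤ ∫ x in (u a)..(u (a+1)), |Real.cos x| := by
      rw [← integral_cos]
      exact intervalIntegral.abs_integral_le_integral_abs hle
    rw [heq, abs_mul, abs_mul, abs_of_nonneg hs.le] at hb
    rw [le_div_iff₀ (by norm_num : (0:ℝ) < 2)]
    calc |Real.cos (t + ↑a * π / ↑k)| * Real.sin h * 2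
        = |(2:ℝ)| * |Real.cos (t + ↑a * π / ↑k)| * Real.sin h := by
          rw [abs_of_nonneg (by norm_num : (0:ℝ) ≤ 2)]; ring
      _ ≤ _ := hb
  calc (∑ a ∈ Finset.range k, |Real.cos (t + a * π / k)|) * Real.sin h
      = ∑ a ∈ Finset.range k, |Real.cos (t + a * π / k)| * Real.sin h := by
        rw [Finset.sum_mul]
    _ ≤ ∑ a ∈ Finset.range k, (∫ x in (u a)..(u (a+1)), |Real.cos x|) / 2 :=
        Finset.sum_le_sum fun a _ => hterm a
    _ = (∑ a ∈ Finset.range k, ∫ x in (u a)..(u (a+1)), |Real.cos x|) / 2 := by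
        rw [Finset.sum_div]
    _ = (∫ x in (u 0)..(u k), |Real.cos x|) / 2 := by
        rw [intervalIntegral.sum_integral_adjacent_intervals]
        intro i _
        exact (Real.continuous_cos.abs).intervalIntegrable _ _
    _ = 1 := by
        have : u k = u 0 + π := by
          simp only [hu]
          field_simp
          push_cast; ring
        rw [this, integral_abs_cos']; norm_num

/-- Upper bound for arbitrary sign vectors. -/
lemma sign_sum_abs_le (k : ℕ) (hk : 3 ≤ k) (σ : Fin k → ℝ)
    (hσ : ∀ a, σ a = 1 ∨ σ a = -1) :
    ‖∑ a : Fin k, (σ a : ℂ) * Complex.exp (Complex.I * (a : ℝ) * π / k)‖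
      ≤ 1 / Real.sin (π / (2 * k)) := by
  have hk0 : (k:ℝ) ≠ 0 := by positivity
  set S : ℂ := ∑ a : Fin k, (σ a : ℂ) * Complex.exp (Complex.I * (a : ℝ) * π / k) with hS
  set ψ : ℝ := -Complex.arg S with hψ
  have hone : Complex.exp (↑ψ * Complex.I) * Complex.exp (↑(Complex.arg S) * Complex.I) = 1 := by
    rw [← Complex.exp_add, hψ]
    push_cast
    ring_nf
    exact Complex.exp_zero
  have habs : (Complex.exp (↑ψ * Complex.I) * S).re = ‖S‖ := by
    conv_lhs => rw [← Complex.norm_mul_exp_arg_mul_I S]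
    rw [mul_left_comm, hone, mul_one, Complex.ofReal_re]
  have hterm : ∀ a : Fin k,
      (Complex.exp (↑ψ * Complex.I) * ((σ a : ℂ) * Complex.exp (Complex.I * (a : ℝ) * π / k))).re
        = σ a * Real.cos (ψ + (a:ℕ) * π / k) := by
    intro a
    have e1 : Complex.exp (↑ψ * Complex.I) * ((σ a : ℂ) * Complex.exp (Complex.I * (a : ℝ) * π / k))
        = (σ a : ℂ) * Complex.exp (((ψ + (a:ℕ) * π / k : ℝ) : ℂ) * Complex.I) := by
      rw [mul_left_comm, ← Complex.exp_add]
      congr 1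
      push_cast
      ring
    rw [e1, Complex.re_ofReal_mul, Complex.exp_ofReal_mul_I_re]
  have : ‖S‖ ≤ ∑ a ∈ Finset.range k, |Real.cos (ψ + a * π / k)| := by
    rw [← habs, hS, Finset.mul_sum, Complex.re_sum]
    calc ∑ a : Fin k, (Complex.exp (↑ψ * Complex.I)
            * ((σ a : ℂ) * Complex.exp (Complex.I * (a : ℝ) * π / k))).re
        = ∑ a : Fin k, σ a * Real.cos (ψ + (a:ℕ) * π / k) := by
          exact Finset.sum_congr rfl fun a _ => hterm a
      _ ≤ ∑ a : Fin k, |Real.cos (ψ + (a:ℕ) * π / k)| := by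
          refine Finset.sum_le_sum fun a _ => ?_
          rcases hσ a with h | h <;> rw [h] <;>
            simp [neg_le_abs, le_abs_self]
      _ = ∑ a ∈ Finset.range k, |Real.cos (ψ + a * π / k)| := by
          exact Fin.sum_univ_eq_sum_range (fun a => |Real.cos (ψ + a * π / k)|) k
  exact this.trans (abs_cos_sum_le' k (by omega) ψ)

/-- For `k ≥ 3`, the maximum over sign vectors `σ ∈ {±1}^k` of
`|∑_a σ_a e^{i a π / k}|²` equals `1 / sin²(π/(2k))`, and the maximum is achieved
by the all-ones vector. -/
theorem max_sign_vector_exponential_sum (k : ℕ) (hk : 3 ≤ k) :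
    IsGreatest
      {x : ℝ | ∃ σ : Fin k → ℝ, (∀ a, σ a = 1 ∨ σ a = -1) ∧
        x = ‖∑ a : Fin k,
              (σ a : ℂ) * Complex.exp (Complex.I * (a : ℝ) * π / k)‖ ^ 2}
      (1 / Real.sin (π / (2 * k)) ^ 2) ∧
    ‖∑ a : Fin k, Complex.exp (Complex.I * (a : ℝ) * π / k)‖ ^ 2
      = 1 / Real.sin (π / (2 * k)) ^ 2 := by
  have hk1 : (1:ℝ) ≤ k := by exact_mod_cast (by omega : 1 ≤ k)
  have hkpos : (0:ℝ) < k := by linarith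
  have hk0 : (k:ℂ) ≠ 0 := by exact_mod_cast (by positivity : (k:ℝ) ≠ 0)
  have hhpos : 0 < π / (2 * k) := by positivity
  have hhlt : π / (2 * k) < π := by
    rw [div_lt_iff₀ (by positivity)]
    nlinarith [Real.pi_pos]
  have hs : 0 < Real.sin (π / (2 * k)) := Real.sin_pos_of_pos_of_lt_pi hhpos hhlt
  -- the value for the all-ones vector
  set z : ℂ := Complex.exp (((π / k : ℝ) : ℂ) * Complex.I) with hz
  have hzpow : ∀ a : ℕ, Complex.exp (Complex.I * (a : ℝ) * π / k) = z ^ a := by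
    intro a
    rw [hz, ← Complex.exp_nat_mul]
    congr 1
    push_cast
    field_simp
  have hzne : z ≠ 1 := by
    rw [hz, Ne, Complex.exp_eq_one_iff]
    rintro ⟨n, hn⟩
    have hI : ((π / k : ℝ) : ℂ) * Complex.I = (((n : ℝ) * (2 * π) : ℝ) : ℂ) * Complex.I := by
      rw [hn]; push_cast; ring
    have hre : (π / k : ℝ) = (n : ℝ) * (2 * π) :=
      Complex.ofReal_inj.mp (mul_right_cancel₀ Complex.I_ne_zero hI)
    have hπ := Real.pi_pos
    have hnpos : (0:ℝ) < (n:ℝ) := by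
      rcases lt_trichotomy ((n:ℝ)) 0 with h | h | h
      · nlinarith [div_pos hπ hkpos]
      · rw [h, zero_mul] at hre; nlinarith [div_pos hπ hkpos]
      · exact h
    have hn1 : (1:ℝ) ≤ (n:ℝ) := by exact_mod_cast (by exact_mod_cast hnpos : (0:ℤ) < n)
    have : π / k ≤ π := by
      rw [div_le_iff₀ hkpos]; nlinarith
    nlinarith
  have hzk : z ^ k = -1 := by
    rw [hz, ← Complex.exp_nat_mul]
    have : (k : ℂ) * (((π / k : ℝ) : ℂ) * Complex.I) = ↑π * Complex.I := by
      push_cast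
      field_simp
    rw [this, Complex.exp_pi_mul_I]
  have hsum : (∑ a : Fin k, Complex.exp (Complex.I * (a : ℝ) * π / k)) = -2 / (z - 1) := by
    calc (∑ a : Fin k, Complex.exp (Complex.I * (a : ℝ) * π / k))
        = ∑ a : Fin k, z ^ (a : ℕ) := by
          exact Finset.sum_congr rfl fun a _ => hzpow a
      _ = ∑ a ∈ Finset.range k, z ^ a := Fin.sum_univ_eq_sum_range (fun a => z ^ a) k
      _ = (z ^ k - 1) / (z - 1) := geom_sum_eq hzne k
      _ = -2 / (z - 1) := by rw [hzk]; norm_num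
  have hzsub : ‖z - 1‖ ^ 2 = 4 * Real.sin (π / (2 * k)) ^ 2 := by
    rw [Complex.sq_norm, Complex.normSq_apply]
    have hre : z.re = Real.cos (π / k) := Complex.exp_ofReal_mul_I_re _
    have him : z.im = Real.sin (π / k) := Complex.exp_ofReal_mul_I_im _
    simp only [Complex.sub_re, Complex.sub_im, Complex.one_re, Complex.one_im, hre, him]
    have h1 : π / (2 * k) = (π / k) / 2 := by ring
    have h2 : Real.cos (π / k) = 1 - 2 * Real.sin ((π / k) / 2) ^ 2 := by
      have := Real.cos_sq ((π / k) / 2)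
      have h3 : 2 * ((π / k) / 2) = π / k := by ring
      rw [h3] at this
      nlinarith [Real.sin_sq_add_cos_sq ((π / k) / 2)]
    rw [h1, h2]
    nlinarith [Real.sin_sq_add_cos_sq (π / k)]
  have habs1 : ‖∑ a : Fin k, Complex.exp (Complex.I * (a : ℝ) * π / k)‖ ^ 2
      = 1 / Real.sin (π / (2 * k)) ^ 2 := by
    rw [hsum, norm_div, div_pow, hzsub]
    have : ‖(-2 : ℂ)‖ ^ 2 = 4 := by
      rw [norm_neg, Complex.norm_two]
      norm_num
    rw [this]
    rw [div_eq_div_iff (by positivity) (by positivity)]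
    ring
  refine ⟨⟨⟨fun _ => 1, fun a => Or.inl rfl, ?_⟩, ?_⟩, habs1⟩
  · simp only [Complex.ofReal_one, one_mul]
    exact habs1.symm
  · rintro x ⟨σ, hσ, rfl⟩
    have hb := sign_sum_abs_le k hk σ hσ
    have hnn : 0 ≤ ‖∑ a : Fin k,
        (σ a : ℂ) * Complex.exp (Complex.I * (a : ℝ) * π / k)‖ := norm_nonneg _
    calc ‖∑ a : Fin k,
          (σ a : ℂ) * Complex.exp (Complex.I * (a : ℝ) * π / k)‖ ^ 2
        ≤ (1 / Real.sin (π / (2 * k))) ^ 2 := by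
          exact pow_le_pow_left₀ hnn hb 2
      _ = 1 / Real.sin (π / (2 * k)) ^ 2 := by rw [div_pow, one_pow]
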